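/- Assume α̃ − α < 1 where F_h(q) = Θ(q^{α+1}) and on the high-action path e^{r̃ⁿ_h(r)} = Θ(n^{1/α̃}) with increments bounded below as in the lower-envelope lemma. Then for every ε > 0 there exists r̄ ≥ 0 such that for all initial values r ≥ r̄, ∑_{n≥0} e^{−(α+1)·r̃ⁿ_h(r)} < ε, where r̃ⁿ_h(r) is the sequence defined by r̃¹ = r and r̃^{n+1} = r̃ⁿ + Ũ(r̃ⁿ) with Ũ(r) ≥ c·e^{−α̃r} for r ≥ some threshold. -/

import Mathlib

open Filter

/-- Assume `αt − α < 1`, and let `rt r` be the misspecified public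
log-likelihood on the all-high-action path started at `r`: `rt r 0 = r`,
`rt r (n+1) = rt r n + Ut (rt r n)`, where `Ut > 0` is decreasing with
`Ut x ≥ c·e^{−αt·x}` for `x ≥ r₀`. Then for every `ε > 0` there is `rb ≥ 0`
such that for all initial values `r ≥ rb`, `∑_{n≥0} e^{−(α+1)·rt r n} < ε`. -/
theorem stmt12 (Ut : ℝ → ℝ) (α αt c r₀ : ℝ) (rt : ℝ → ℕ → ℝ)
    (hα : 0 < α) (hαt : 0 < αt) (hcond : αt - α < 1)
    (hc : 0 < c)
    (hUpos : ∀ x, 0 ≤ x → 0 < Ut x)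
    (hUanti : AntitoneOn Ut (Set.Ici (0:ℝ)))
    (hUlb : ∀ x, r₀ ≤ x → c * Real.exp (-αt * x) ≤ Ut x)
    (hinit : ∀ r : ℝ, rt r 0 = r)
    (hrec : ∀ r : ℝ, ∀ n : ℕ, rt r (n + 1) = rt r n + Ut (rt r n)) :
    ∀ ε : ℝ, 0 < ε → ∃ rb : ℝ, 0 ≤ rb ∧ ∀ r : ℝ, rb ≤ r →
      Summable (fun n : ℕ => Real.exp (-(α + 1) * rt r n)) ∧
      (∑' n : ℕ, Real.exp (-(α + 1) * rt r n)) < ε := by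
  intro ε hε
  set p : ℝ := (α + 1) / αt with hp
  have hp1 : 1 < p := by
    rw [hp, lt_div_iff₀ hαt]; linarith
  set q : ℝ := (p + 1) / 2 with hq
  set d : ℝ := (p - 1) / 2 with hd
  have hq1 : 1 < q := by rw [hq]; linarith
  have hd0 : 0 < d := by rw [hd]; linarith
  have hqd : -p = -d + -q := by rw [hq, hd]; ring
  set b : ℝ := c * αt with hb
  have hb0 : 0 < b := mul_pos hc hαt
  set m : ℝ := min 1 b with hm
  have hm0 : 0 < m := lt_min one_pos hb0
  -- the comparison series
  have hS : Summable (fun n : ℕ => ((n : ℝ) + 1) ^ (-q)) := by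
    have : Summable (fun n : ℕ => ((n : ℝ)) ^ (-q)) :=
      Real.summable_nat_rpow.mpr (by linarith)
    have := (summable_nat_add_iff 1).mpr this
    refine this.congr fun n => ?_
    push_cast
    norm_num
  set S : ℝ := ∑' n : ℕ, ((n : ℝ) + 1) ^ (-q) with hSdef
  have hS0 : 0 ≤ S :=
    tsum_nonneg fun n => Real.rpow_nonneg (by positivity) _
  set K : ℝ := m ^ (-p) with hK
  have hK0 : 0 < K := Real.rpow_pos_of_pos hm0 _
  -- choose R such that K * S * exp(-(αt*d) r) < ε for r ≥ R
  have htend : Tendsto (fun r : ℝ => K * S * Real.exp (-(αt * d) * r)) atTop (nhds 0) := by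
    have h1 : Tendsto (fun r : ℝ => -(αt * d) * r) atTop atBot := by
      apply tendsto_id.const_mul_atTop_of_neg
      nlinarith
    have h2 : Tendsto (fun r : ℝ => Real.exp (-(αt * d) * r)) atTop (nhds 0) :=
      Real.tendsto_exp_atBot.comp h1
    simpa using h2.const_mul (K * S)
  obtain ⟨R, hR⟩ := (htend.eventually (eventually_lt_nhds hε)).exists_forall_of_atTop
  refine ⟨max (max r₀ 0) (max R 0), ?_, ?_⟩
  · exact le_max_of_le_right (le_max_right R 0)
  intro r hr
  have hrr₀ : r₀ ≤ r := le_trans (le_max_of_le_left le_rfl) (le_trans (le_max_left _ _) hr)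
  have hr0 : (0 : ℝ) ≤ r := le_trans (le_max_of_le_right le_rfl) (le_trans (le_max_left _ _) hr)
  have hrR : R ≤ r := le_trans (le_max_of_le_left le_rfl) (le_trans (le_max_right _ _) hr)
  set A : ℝ := Real.exp (αt * r) with hA
  have hA1 : 1 ≤ A := Real.one_le_exp (by positivity)
  -- rt r n ≥ r
  have hmono : ∀ n, r ≤ rt r n := by
    intro n
    induction n with
    | zero => rw [hinit]
    | succ n ih =>
      have := hUpos (rt r n) (le_trans hr0 ih)
      rw [hrec]; linarith
  -- exp(αt * rt r n) ≥ A + b n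
  have hz : ∀ n : ℕ, A + b * n ≤ Real.exp (αt * rt r n) := by
    intro n
    induction n with
    | zero => simp [hinit, hA]
    | succ n ih =>
      have hrn := hmono n
      have hE : (0 : ℝ) < Real.exp (αt * rt r n) := Real.exp_pos _
      have hU : c * Real.exp (-αt * rt r n) ≤ Ut (rt r n) := hUlb _ (le_trans hrr₀ hrn)
      have hU0 : 0 < Ut (rt r n) := hUpos _ (le_trans hr0 hrn)
      have hexp : 1 + αt * Ut (rt r n) ≤ Real.exp (αt * Ut (rt r n)) := by
        have := Real.add_one_le_exp (αt * Ut (rt r n)); linarith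
      have hee : Real.exp (-αt * rt r n) * Real.exp (αt * rt r n) = 1 := by
        rw [← Real.exp_add]; ring_nf; exact Real.exp_zero
      have key : b ≤ αt * Ut (rt r n) * Real.exp (αt * rt r n) := by
        have : αt * (c * Real.exp (-αt * rt r n)) * Real.exp (αt * rt r n)
            ≤ αt * Ut (rt r n) * Real.exp (αt * rt r n) := by
          apply mul_le_mul_of_nonneg_right _ hE.le
          exact mul_le_mul_of_nonneg_left hU hαt.le
        calc b = αt * (c * Real.exp (-αt * rt r n)) * Real.exp (αt * rt r n) := by
                rw [hb, show αt * (c * Real.exp (-αt * rt r n)) * Real.exp (αt * rt r n)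
                  = c * αt * (Real.exp (-αt * rt r n) * Real.exp (αt * rt r n)) from by ring,
                  hee, mul_one]
          _ ≤ _ := this
      have : A + b * n + b ≤ Real.exp (αt * rt r n) * Real.exp (αt * Ut (rt r n)) := by
        have h2 : Real.exp (αt * rt r n) * (1 + αt * Ut (rt r n))
            ≤ Real.exp (αt * rt r n) * Real.exp (αt * Ut (rt r n)) :=
          mul_le_mul_of_nonneg_left hexp hE.le
        have hexpand : Real.exp (αt * rt r n) * (1 + αt * Ut (rt r n))
            = Real.exp (αt * rt r n) + αt * Ut (rt r n) * Real.exp (αt * rt r n) := by ring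
        linarith
      rw [hrec, mul_add, Real.exp_add]
      push_cast
      linarith
  -- pointwise bound
  have hAbn : ∀ n : ℕ, (0:ℝ) < A + b * n := fun n => by positivity
  have hbound : ∀ n : ℕ,
      Real.exp (-(α + 1) * rt r n) ≤ K * A ^ (-d) * ((n : ℝ) + 1) ^ (-q) := by
    intro n
    have h1 : Real.exp (-(α + 1) * rt r n) = Real.exp (αt * rt r n) ^ (-p) := by
      rw [← Real.exp_mul]
      congr 1
      field_simp [hp]
      rw [hp, mul_assoc, mul_div_assoc', mul_div_cancel_left₀ _ hαt.ne']; ring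
    have h2 : Real.exp (αt * rt r n) ^ (-p) ≤ (A + b * n) ^ (-p) :=
      Real.rpow_le_rpow_of_nonpos (hAbn n) (hz n) (by linarith)
    have h3 : m * (A + n) ≤ A + b * n := by
      have hm1 : m ≤ 1 := min_le_left _ _
      have hmb : m ≤ b := min_le_right _ _
      have hn0 : (0:ℝ) ≤ (n:ℝ) := Nat.cast_nonneg n
      nlinarith
    have hmA : (0:ℝ) < m * (A + n) := by positivity
    have h4 : (A + b * n) ^ (-p) ≤ (m * (A + n)) ^ (-p) :=
      Real.rpow_le_rpow_of_nonpos hmA h3 (by linarith)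
    have h5 : (m * (A + n)) ^ (-p) = m ^ (-p) * (A + n) ^ (-p) :=
      Real.mul_rpow hm0.le (by positivity)
    have h6 : (A + (n:ℝ)) ^ (-p) = (A + n) ^ (-d) * (A + n) ^ (-q) := by
      rw [hqd, Real.rpow_add (by positivity)]
    have h7 : (A + (n:ℝ)) ^ (-d) ≤ A ^ (-d) :=
      Real.rpow_le_rpow_of_nonpos (by positivity) (by have : (0:ℝ) ≤ (n:ℝ) := Nat.cast_nonneg n; linarith) (by linarith)
    have h8 : (A + (n:ℝ)) ^ (-q) ≤ ((n:ℝ) + 1) ^ (-q) :=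
      Real.rpow_le_rpow_of_nonpos (by positivity) (by have : (0:ℝ) ≤ (n:ℝ) := Nat.cast_nonneg n; linarith) (by linarith)
    calc Real.exp (-(α + 1) * rt r n) = Real.exp (αt * rt r n) ^ (-p) := h1
      _ ≤ (A + b * n) ^ (-p) := h2
      _ ≤ (m * (A + n)) ^ (-p) := h4
      _ = m ^ (-p) * ((A + n) ^ (-d) * (A + n) ^ (-q)) := by rw [h5, h6]
      _ ≤ m ^ (-p) * (A ^ (-d) * ((n:ℝ) + 1) ^ (-q)) := by
          apply mul_le_mul_of_nonneg_left _ (Real.rpow_nonneg hm0.le _)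
          exact mul_le_mul h7 h8 (Real.rpow_nonneg (by positivity) _)
            (Real.rpow_nonneg (by positivity) _)
      _ = K * A ^ (-d) * ((n:ℝ) + 1) ^ (-q) := by rw [hK]; ring
  have hCsum : Summable (fun n : ℕ => K * A ^ (-d) * ((n : ℝ) + 1) ^ (-q)) :=
    hS.mul_left _
  have hfsum : Summable (fun n : ℕ => Real.exp (-(α + 1) * rt r n)) :=
    Summable.of_nonneg_of_le (fun n => (Real.exp_pos _).le) hbound hCsum
  refine ⟨hfsum, ?_⟩
  have hts : (∑' n : ℕ, Real.exp (-(α + 1) * rt r n))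
      ≤ K * A ^ (-d) * S := by
    calc (∑' n : ℕ, Real.exp (-(α + 1) * rt r n))
        ≤ ∑' n : ℕ, K * A ^ (-d) * ((n : ℝ) + 1) ^ (-q) :=
          Summable.tsum_le_tsum hbound hfsum hCsum
      _ = K * A ^ (-d) * S := by rw [tsum_mul_left]
  have hAd : A ^ (-d) = Real.exp (-(αt * d) * r) := by
    rw [hA, ← Real.exp_mul]; congr 1; ring
  calc (∑' n : ℕ, Real.exp (-(α + 1) * rt r n)) ≤ K * A ^ (-d) * S := hts
    _ = K * S * Real.exp (-(αt * d) * r) := by rw [hAd]; ring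
    _ < ε := hR r hrR
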